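/- Let f : ℝ^{d_x} → ℝ^{d_z} be linear with operator norm at most 1, let S ⊆ ℝ^{d_x} be a linear subspace of dimension d_S, and let X ∈ ℝ^{d_x×n} satisfy Col(X) = S. If σ_p(f(X)) = σ_p(X) for all 1 ≤ p ≤ d_S, then f restricted to S is an ℓ²-isometry, i.e., ‖f(u)‖₂ = ‖u‖₂ for all u ∈ S. -/

import Mathlib

open Matrix

noncomputable def codingRate {d : ℕ} {m : Type*} [Fintype m] (ε : ℝ)
    (Z : Matrix (Fin d) m ℝ) : ℝ :=
  (1 / 2) * Real.log ((1 + ((d : ℝ) / (Fintype.card m * ε ^ 2)) • (Z * Zᵀ)).det)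

noncomputable def deltaR {d n : ℕ} (ε : ℝ) (Z₁ Z₂ : Matrix (Fin d) (Fin n) ℝ) : ℝ :=
  codingRate ε (fromCols Z₁ Z₂) - (1 / 2) * codingRate ε Z₁ - (1 / 2) * codingRate ε Z₂

theorem Matrix.isHermitian_transpose_mul_self {m n α : Type*} [Fintype m] [CommSemiring α]
    [StarRing α] [TrivialStar α] (A : Matrix m n α) : (Aᵀ * A).IsHermitian := by
  simpa [conjTranspose_eq_transpose_of_trivial] using isHermitian_conjTranspose_mul_self A

noncomputable def sval {d n : ℕ} (A : Matrix (Fin d) (Fin n) ℝ) : Fin n → ℝ :=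
  fun p => Real.sqrt ((Matrix.isHermitian_transpose_mul_self A).eigenvalues
    (Tuple.sort ((Matrix.isHermitian_transpose_mul_self A).eigenvalues) p.rev))

noncomputable def colSpan {d n : ℕ} (A : Matrix (Fin d) (Fin n) ℝ) :
    Submodule ℝ (Fin d → ℝ) :=
  Submodule.span ℝ (Set.range Aᵀ)

-- trace = sum of eigenvalues for real hermitian
lemma trace_eq_sum_eigenvalues {n : Type*} [Fintype n] [DecidableEq n]
    {A : Matrix n n ℝ} (hA : A.IsHermitian) : A.trace = ∑ i, hA.eigenvalues i := by
  simpa using hA.trace_eq_sum_eigenvalues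

lemma sval_nonneg {d n : ℕ} (A : Matrix (Fin d) (Fin n) ℝ) (p : Fin n) :
    0 ≤ sval A p := Real.sqrt_nonneg _

lemma sval_sq {d n : ℕ} (A : Matrix (Fin d) (Fin n) ℝ) (p : Fin n) :
    sval A p ^ 2 = (Matrix.isHermitian_transpose_mul_self A).eigenvalues
      (Tuple.sort ((Matrix.isHermitian_transpose_mul_self A).eigenvalues) p.rev) :=
  Real.sq_sqrt (Matrix.eigenvalues_conjTranspose_mul_self_nonneg A _)

lemma sum_sval_sq {d n : ℕ} (A : Matrix (Fin d) (Fin n) ℝ) :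
    ∑ p, sval A p ^ 2 = ∑ j, ∑ i, A i j ^ 2 := by
  simp_rw [sval_sq]
  rw [show (∑ p : Fin n, (Matrix.isHermitian_transpose_mul_self A).eigenvalues
      (Tuple.sort ((Matrix.isHermitian_transpose_mul_self A).eigenvalues) p.rev)) =
      ∑ p : Fin n, (Matrix.isHermitian_transpose_mul_self A).eigenvalues p from
    Equiv.sum_comp ((Fin.revPerm).trans
      (Tuple.sort ((Matrix.isHermitian_transpose_mul_self A).eigenvalues)))
      ((Matrix.isHermitian_transpose_mul_self A).eigenvalues)]
  rw [← trace_eq_sum_eigenvalues]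
  rw [Matrix.trace]
  simp only [Matrix.diag_apply, Matrix.mul_apply, Matrix.conjTranspose_apply, star_trivial]
  rw [Finset.sum_comm]
  simp only [sq]
  exact Finset.sum_comm

lemma sval_eq_zero_of_rank_le {d n : ℕ} (A : Matrix (Fin d) (Fin n) ℝ) (p : Fin n)
    (h : A.rank ≤ (p : ℕ)) : sval A p = 0 := by
  set hH := Matrix.isHermitian_transpose_mul_self A with hHdef
  set L := hH.eigenvalues with hLdef
  set σ := Tuple.sort L with hσdef
  have hcard : Fintype.card {i // L i ≠ 0} ≤ (p : ℕ) := by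
    rw [← hH.rank_eq_card_non_zero_eigs, Matrix.rank_transpose_mul_self]
    exact h
  have hz : L (σ p.rev) = 0 := by
    by_contra hne
    have hpos : 0 < L (σ p.rev) :=
      lt_of_le_of_ne (Matrix.eigenvalues_conjTranspose_mul_self_nonneg A _) (Ne.symm hne)
    have hmono : Monotone (L ∘ σ) := Tuple.monotone_sort L
    have hsub : (Finset.Ici p.rev).card ≤ Fintype.card {i // L i ≠ 0} := by
      rw [Fintype.card_subtype]
      apply Finset.card_le_card_of_injOn (fun j => σ j)
      · intro j hj
        simp only [Finset.mem_coe, Finset.mem_Ici] at hj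
        simp only [Finset.mem_coe, Finset.mem_filter, Finset.mem_univ, true_and]
        exact ne_of_gt (lt_of_lt_of_le hpos (hmono hj))
      · intro a _ b _ hab
        exact σ.injective hab
    rw [Fin.card_Ici] at hsub
    have hp : (p : ℕ) < n := p.2
    have hrev : ((p.rev : Fin n) : ℕ) = n - ((p : ℕ) + 1) := Fin.val_rev p
    omega
  show Real.sqrt (L (σ p.rev)) = 0
  rw [hz, Real.sqrt_zero]


/-- If F has operator norm ≤ 1, Col(X) = S with dim S = dS, and the top dS singular
values of F X equal those of X, then x ↦ F x is an ℓ²-isometry on S. -/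
theorem stmt4 {dx dz n dS : ℕ} (F : Matrix (Fin dz) (Fin dx) ℝ)
    (hF : ∀ x : Fin dx → ℝ, ∑ i, (F.mulVec x i) ^ 2 ≤ ∑ i, (x i) ^ 2)
    (S : Submodule ℝ (Fin dx → ℝ)) (hdS : Module.finrank ℝ S = dS)
    (X : Matrix (Fin dx) (Fin n) ℝ) (hX : colSpan X = S)
    (hsv : ∀ p : Fin n, (p : ℕ) < dS → sval (F * X) p = sval X p) :
    ∀ u ∈ S, ∑ i, (F.mulVec u i) ^ 2 = ∑ i, (u i) ^ 2 := by
  classical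
  have hrank : X.rank = dS := by
    rw [Matrix.rank_eq_finrank_span_cols, show Submodule.span ℝ (Set.range X.col) = S from hX, hdS]
  have hrankY : (F * X).rank ≤ dS := hrank ▸ Matrix.rank_mul_le_right F X
  have hsq : ∀ p : Fin n, sval (F * X) p ^ 2 = sval X p ^ 2 := by
    intro p
    by_cases hp : (p : ℕ) < dS
    · rw [hsv p hp]
    · push_neg at hp
      rw [sval_eq_zero_of_rank_le _ p (le_trans hrankY hp),
        sval_eq_zero_of_rank_le _ p (le_trans hrank.le hp)]
  have hsum : ∑ j, ∑ i, (F * X) i j ^ 2 = ∑ j, ∑ i, X i j ^ 2 := by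
    rw [← sum_sval_sq, ← sum_sval_sq]
    exact Finset.sum_congr rfl fun p _ => hsq p
  have hmulv : ∀ j i, F.mulVec (fun k => X k j) i = (F * X) i j := by
    intro j i
    rw [Matrix.mul_apply]
    rfl
  have hcol_le : ∀ j, ∑ i, (F * X) i j ^ 2 ≤ ∑ i, X i j ^ 2 := by
    intro j
    have h := hF (fun k => X k j)
    simp_rw [hmulv j] at h
    exact h
  have hcol_eq : ∀ j, ∑ i, (F * X) i j ^ 2 = ∑ i, X i j ^ 2 := by
    intro j
    exact (Finset.sum_eq_sum_iff_of_le (fun j _ => hcol_le j)).mp hsum j (Finset.mem_univ j)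
  set G : Matrix (Fin dx) (Fin dx) ℝ := 1 - Fᵀ * F with hGdef
  have hquad : ∀ x : Fin dx → ℝ,
      x ⬝ᵥ (G *ᵥ x) = ∑ i, (x i) ^ 2 - ∑ i, (F.mulVec x i) ^ 2 := by
    intro x
    rw [hGdef, Matrix.sub_mulVec, Matrix.one_mulVec, dotProduct_sub]
    congr 1
    · simp [dotProduct, sq]
    · rw [← Matrix.mulVec_mulVec, Matrix.dotProduct_mulVec, Matrix.vecMul_transpose]
      simp [dotProduct, sq, Matrix.mulVec]
  have hGpsd : G.PosSemidef := by
    rw [Matrix.posSemidef_iff_dotProduct_mulVec]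
    constructor
    · have h1 : (Fᵀ * F).IsHermitian := by
        have := Matrix.isHermitian_transpose_mul_self F
        exact this
      exact Matrix.isHermitian_one.sub h1
    · intro x
      rw [star_trivial, hquad x]
      have := hF x
      linarith
  have hker : ∀ u ∈ S, G *ᵥ u = 0 := by
    have hsub : S ≤ LinearMap.ker G.mulVecLin := by
      rw [← hX, colSpan, Submodule.span_le]
      rintro _ ⟨j, rfl⟩
      simp only [SetLike.mem_coe, LinearMap.mem_ker, Matrix.mulVecLin_apply]
      apply (hGpsd.dotProduct_mulVec_zero_iff (Xᵀ j)).mp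
      rw [star_trivial, hquad]
      have hc := hcol_eq j
      have e2 : ∑ i, (Xᵀ j i) ^ 2 = ∑ i, X i j ^ 2 := rfl
      have e3 : ∑ i, (F.mulVec (Xᵀ j) i) ^ 2 = ∑ i, (F * X) i j ^ 2 := by
        refine Finset.sum_congr rfl fun i _ => ?_
        rw [show F.mulVec (Xᵀ j) i = F.mulVec (fun k => X k j) i from rfl, hmulv j i]
      rw [e2, e3, hc, sub_self]
    intro u hu
    exact LinearMap.mem_ker.mp (hsub hu)
  intro u hu
  have h0 := hker u hu
  have h1 := hquad u
  rw [h0, dotProduct_zero] at h1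
  linarith
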